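/- Let H be a complex Hilbert space (an inner product space over ℂ that is complete). Let E : (H →L[ℂ] H) → ℝ≥0∞ satisfy: (i) unitary invariance: for every linear isometric equivalence U : H ≃ₗᵢ[ℂ] H and every T : H →L[ℂ] H, E((U.symm : H →L[ℂ] H) ∘L T ∘L (U : H →L[ℂ] H)) = E(T); (ii) orthogonal additivity: for all self-adjoint S, T : H →L[ℂ] H with S ∘L T = 0, E(S + T) = E(S) + E(T); (iii) E(0) = 0. Fix a unit vector e : H with ‖e‖ = 1, let P_e : H →L[ℂ] H be the orthogonal projection onto the line ℂ ∙ e, and define h : ℝ → ℝ≥0∞ by h(λ) = E(λ • P_e). Let m : ℕ, let K : Fin m → Submodule ℂ H be finite-dimensional subspaces that are pairwise orthogonal (for i ≠ j, every vector of K i is orthogonal to every vector of K j), let P j : H →L[ℂ] H be the orthogonal projection onto K j, and let λ : Fin m → ℝ. Then E(∑ j, λ j • P j) = ∑ j, (Module.finrank ℂ (K j)) • h(λ j), where ℕ acts on ℝ≥0∞ by repeated addition. -/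

import Mathlib

open ContinuousLinearMap

open scoped InnerProductSpace

section Aux

variable {H : Type*} [NormedAddCommGroup H] [InnerProductSpace ℂ H] [CompleteSpace H]

/-- Formula for the rank-one projection onto the span of a unit vector. -/
lemma proj_singleton_coe (v : H) (hv : ‖v‖ = 1) (x : H) :
    ((Submodule.orthogonalProjectionOnto (ℂ ∙ v) x : H)) = (inner ℂ v x : ℂ) • v := by
  exact Submodule.starProjection_unit_singleton ℂ hv x

/-- Composition of rank-one projections onto orthogonal unit vectors vanishes. -/
lemma proj_singleton_comp_zero (u v : H) (hu : ‖u‖ = 1) (hv : ‖v‖ = 1)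
    (h : (inner ℂ u v : ℂ) = 0) :
    ((ℂ ∙ u).subtypeL ∘L Submodule.orthogonalProjectionOnto (ℂ ∙ u)) ∘L
      ((ℂ ∙ v).subtypeL ∘L Submodule.orthogonalProjectionOnto (ℂ ∙ v)) = 0 := by
  ext x
  simp only [ContinuousLinearMap.comp_apply, ContinuousLinearMap.zero_apply,
    Submodule.subtypeL_apply]
  rw [proj_singleton_coe v hv x, map_smul, Submodule.coe_smul,
    proj_singleton_coe u hu v, h]
  simp

/-- Any two unit vectors are related by a (complex-linear) unitary, up to a unimodular phase. -/
lemma exists_unitary_map (e v : H) (he : ‖e‖ = 1) (hv : ‖v‖ = 1) :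
    ∃ (U : H ≃ₗᵢ[ℂ] H) (c : ℂ), ‖c‖ = 1 ∧ U e = c • v := by
  set t : ℂ := inner ℂ v e with ht
  set c : ℂ := if t = 0 then 1 else t / ‖t‖ with hc
  have hcnorm : ‖c‖ = 1 := by
    rw [hc]
    split_ifs with h0
    · simp
    · have htn : ‖t‖ ≠ 0 := norm_ne_zero_iff.mpr h0
      rw [norm_div, Complex.norm_real, norm_norm, div_self htn]
  set v' : H := c • v with hv'def
  have hv'norm : ‖v'‖ = 1 := by rw [hv'def, norm_smul, hcnorm, hv, one_mul]
  have hinner_v'e : (inner ℂ v' e : ℂ) = (‖t‖ : ℂ) := by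
    rw [hv'def, inner_smul_left, ← ht, hc]
    split_ifs with h0
    · simp [h0]
    · rw [map_div₀, div_mul_eq_mul_div, Complex.conj_mul']
      rw [Complex.conj_ofReal, sq]
      have htn : (‖t‖ : ℂ) ≠ 0 := by
        simpa using norm_ne_zero_iff.mpr h0
      field_simp
  have hinner_ev' : (inner ℂ e v' : ℂ) = (‖t‖ : ℂ) := by
    rw [← inner_conj_symm, hinner_v'e, Complex.conj_ofReal]
  by_cases hw : e = v'
  · refine ⟨LinearIsometryEquiv.refl ℂ H, c, hcnorm, ?_⟩
    simpa [hv'def] using hw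
  · refine ⟨Submodule.reflection ((ℂ ∙ (e - v'))ᗮ), c, hcnorm, ?_⟩
    set R := Submodule.reflection ((ℂ ∙ (e - v'))ᗮ) with hR
    have h₁ : R (e - v') = -(e - v') :=
      Submodule.reflection_orthogonalComplement_singleton_eq_neg _
    have h₂ : R (e + v') = e + v' := by
      apply Submodule.reflection_mem_subspace_eq_self
      rw [Submodule.mem_orthogonal_singleton_iff_inner_left]
      rw [inner_sub_right, inner_add_left, inner_add_left, hinner_v'e, hinner_ev',
        inner_self_eq_norm_sq_to_K, inner_self_eq_norm_sq_to_K, he, hv'norm]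
      ring
    rw [map_add] at h₂
    rw [map_sub] at h₁
    have h3 : R e + R e = v' + v' := by
      calc R e + R e = (R e + R v') + (R e - R v') := by abel
        _ = (e + v') + -(e - v') := by rw [h₂, h₁]
        _ = v' + v' := by abel
    have h4 : R e = v' := by
      have h5 : (2 : ℂ) • R e = (2 : ℂ) • v' := by
        rw [two_smul, two_smul]; exact h3
      exact smul_right_injective H two_ne_zero h5
    rw [h4, hv'def]

/-- E is invariant when moving a rank-one projection to the base unit vector `e`. -/
lemma rank_one_eval
    (E : (H →L[ℂ] H) → ENNReal)
    (hunitary : ∀ (U : H ≃ₗᵢ[ℂ] H) (T : H →L[ℂ] H),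
      E (U.symm.toLinearIsometry.toContinuousLinearMap ∘L T ∘L
          U.toLinearIsometry.toContinuousLinearMap) = E T)
    (e v : H) (he : ‖e‖ = 1) (hv : ‖v‖ = 1) (lamr : ℝ) :
    E ((lamr : ℂ) • ((ℂ ∙ v).subtypeL ∘L Submodule.orthogonalProjectionOnto (ℂ ∙ v))) =
      E ((lamr : ℂ) • ((ℂ ∙ e).subtypeL ∘L Submodule.orthogonalProjectionOnto (ℂ ∙ e))) := by
  obtain ⟨U, c, hc, hUe⟩ := exists_unitary_map e v he hv
  have hc0 : c ≠ 0 := by intro h; rw [h] at hc; simp at hc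
  have hUsv : U.symm v = c⁻¹ • e := by
    have : v = c⁻¹ • U e := by rw [hUe, smul_smul, inv_mul_cancel₀ hc0, one_smul]
    rw [this, map_smul, LinearIsometryEquiv.symm_apply_apply]
  have hcc : (starRingEnd ℂ) c⁻¹ * c⁻¹ = 1 := by
    rw [map_inv₀, ← mul_inv, Complex.conj_mul', hc]
    norm_num
  have key : U.symm.toLinearIsometry.toContinuousLinearMap ∘L
      ((lamr : ℂ) • ((ℂ ∙ v).subtypeL ∘L Submodule.orthogonalProjectionOnto (ℂ ∙ v))) ∘L
      U.toLinearIsometry.toContinuousLinearMap =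
      (lamr : ℂ) • ((ℂ ∙ e).subtypeL ∘L Submodule.orthogonalProjectionOnto (ℂ ∙ e)) := by
    ext x
    simp only [ContinuousLinearMap.comp_apply, ContinuousLinearMap.smul_apply,
      LinearIsometry.coe_toContinuousLinearMap, LinearIsometryEquiv.coe_toLinearIsometry,
      Submodule.subtypeL_apply]
    rw [proj_singleton_coe v hv, proj_singleton_coe e he]
    have hvinner : (inner ℂ v (U x) : ℂ) = (starRingEnd ℂ) c⁻¹ * (inner ℂ e x : ℂ) := by
      have hveq : v = c⁻¹ • U e := by rw [hUe, smul_smul, inv_mul_cancel₀ hc0, one_smul]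
      rw [hveq, inner_smul_left, LinearIsometryEquiv.inner_map_map]
    rw [map_smul, map_smul, hUsv, hvinner]
    simp only [smul_smul]
    congr 1
    linear_combination ((lamr : ℂ) * (inner ℂ e x : ℂ)) * hcc
  rw [← hunitary U ((lamr : ℂ) • ((ℂ ∙ v).subtypeL ∘L Submodule.orthogonalProjectionOnto (ℂ ∙ v))), key]

/-- Additivity of E over finite sums of pairwise "orthogonal" self-adjoint operators. -/
lemma eval_sum (E : (H →L[ℂ] H) → ENNReal)
    (horth : ∀ S T : H →L[ℂ] H, IsSelfAdjoint S → IsSelfAdjoint T →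
      S ∘L T = 0 → E (S + T) = E S + E T)
    (hzero : E 0 = 0)
    {ι : Type*} (s : Finset ι) (T : ι → H →L[ℂ] H)
    (hsa : ∀ i ∈ s, IsSelfAdjoint (T i))
    (hcomp : ∀ i ∈ s, ∀ j ∈ s, i ≠ j → T i ∘L T j = 0) :
    E (∑ i ∈ s, T i) = ∑ i ∈ s, E (T i) := by
  classical
  induction s using Finset.induction_on with
  | empty => simpa using hzero
  | insert a s' ha ih =>
    rw [Finset.sum_insert ha, Finset.sum_insert ha]
    have hsum_sa : IsSelfAdjoint (∑ i ∈ s', T i) := by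
      apply Finset.sum_induction _ IsSelfAdjoint
      · exact fun _ _ => IsSelfAdjoint.add
      · exact IsSelfAdjoint.zero _
      · exact fun i hi => hsa i (Finset.mem_insert_of_mem hi)
    have hcz : T a ∘L (∑ i ∈ s', T i) = 0 := by
      rw [← ContinuousLinearMap.mul_def, Finset.mul_sum]
      apply Finset.sum_eq_zero
      intro i hi
      rw [ContinuousLinearMap.mul_def]
      exact hcomp a (Finset.mem_insert_self a s') i (Finset.mem_insert_of_mem hi)
        (fun h => ha (h ▸ hi))
    rw [horth _ _ (hsa a (Finset.mem_insert_self a s')) hsum_sa hcz,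
      ih (fun i hi => hsa i (Finset.mem_insert_of_mem hi))
        (fun i hi j hj hij => hcomp i (Finset.mem_insert_of_mem hi) j
          (Finset.mem_insert_of_mem hj) hij)]

/-- Self-adjointness of a real multiple of an orthogonal projection. -/
lemma smul_proj_selfAdjoint (K : Submodule ℂ H) [CompleteSpace K] (lamr : ℝ) :
    IsSelfAdjoint ((lamr : ℂ) • (K.subtypeL ∘L Submodule.orthogonalProjectionOnto K)) := by
  have h1 : IsSelfAdjoint ((lamr : ℂ)) := Complex.conj_ofReal lamr
  exact h1.smul (isSelfAdjoint_starProjection K)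

/-- Finite dimensional evaluation: value on a finite-dimensional projection. -/
lemma findim_eval (E : (H →L[ℂ] H) → ENNReal)
    (hunitary : ∀ (U : H ≃ₗᵢ[ℂ] H) (T : H →L[ℂ] H),
      E (U.symm.toLinearIsometry.toContinuousLinearMap ∘L T ∘L
          U.toLinearIsometry.toContinuousLinearMap) = E T)
    (horth : ∀ S T : H →L[ℂ] H, IsSelfAdjoint S → IsSelfAdjoint T →
      S ∘L T = 0 → E (S + T) = E S + E T)
    (hzero : E 0 = 0)
    (e : H) (he : ‖e‖ = 1)
    (K : Submodule ℂ H) [FiniteDimensional ℂ K] (lamr : ℝ) :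
    E ((lamr : ℂ) • (K.subtypeL ∘L Submodule.orthogonalProjectionOnto K)) =
      (Module.finrank ℂ K) •
        E ((lamr : ℂ) • ((ℂ ∙ e).subtypeL ∘L Submodule.orthogonalProjectionOnto (ℂ ∙ e))) := by
  classical
  set n := Module.finrank ℂ K with hn
  set b : OrthonormalBasis (Fin n) ℂ K := stdOrthonormalBasis ℂ K with hb
  set u : Fin n → H := fun i => (b i : H) with hu
  have hunorm : ∀ i, ‖u i‖ = 1 := by
    intro i
    have := b.orthonormal.1 i
    exact this
  have huorth : ∀ i j, i ≠ j → (inner ℂ (u i) (u j) : ℂ) = 0 := by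
    intro i j hij
    have := b.orthonormal.2 hij
    simpa [hu, Submodule.coe_inner] using this
  have hdecomp : (lamr : ℂ) • (K.subtypeL ∘L Submodule.orthogonalProjectionOnto K) =
      ∑ i, (lamr : ℂ) • ((ℂ ∙ u i).subtypeL ∘L Submodule.orthogonalProjectionOnto (ℂ ∙ u i)) := by
    ext x
    simp only [ContinuousLinearMap.smul_apply, ContinuousLinearMap.comp_apply,
      Submodule.subtypeL_apply, ContinuousLinearMap.sum_apply]
    have h1 : ((Submodule.orthogonalProjectionOnto K x : H)) = ∑ i, (inner ℂ (u i) x : ℂ) • u i := by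
      have := b.orthogonalProjectionOnto_apply_eq_sum (𝕜 := ℂ) x
      calc ((Submodule.orthogonalProjectionOnto K x : H))
          = ((∑ i, (inner ℂ (u i) x : ℂ) • b i : K) : H) := by rw [this]
        _ = ∑ i, (inner ℂ (u i) x : ℂ) • u i := by
            push_cast
            rfl
    rw [h1, Finset.smul_sum]
    congr 1
    funext i
    rw [proj_singleton_coe (u i) (hunorm i) x]
  rw [hdecomp]
  rw [eval_sum E horth hzero Finset.univ _
    (fun i _ => smul_proj_selfAdjoint (ℂ ∙ u i) lamr)
    (fun i _ j _ hij => by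
      rw [smul_comp, comp_smul, proj_singleton_comp_zero (u i) (u j) (hunorm i) (hunorm j)
        (huorth i j hij)]
      simp)]
  have hconst : ∀ i : Fin n,
      E ((lamr : ℂ) • ((ℂ ∙ u i).subtypeL ∘L Submodule.orthogonalProjectionOnto (ℂ ∙ u i))) =
      E ((lamr : ℂ) • ((ℂ ∙ e).subtypeL ∘L Submodule.orthogonalProjectionOnto (ℂ ∙ e))) := fun i =>
    rank_one_eval E hunitary e (u i) he (hunorm i) lamr
  rw [Finset.sum_congr rfl (fun i _ => hconst i), Finset.sum_const, Finset.card_univ,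
    Fintype.card_fin]

end Aux

theorem finite_rank_evaluation
    {H : Type*} [NormedAddCommGroup H] [InnerProductSpace ℂ H] [CompleteSpace H]
    (E : (H →L[ℂ] H) → ENNReal)
    (hunitary : ∀ (U : H ≃ₗᵢ[ℂ] H) (T : H →L[ℂ] H),
      E (U.symm.toLinearIsometry.toContinuousLinearMap ∘L T ∘L
          U.toLinearIsometry.toContinuousLinearMap) = E T)
    (horth : ∀ S T : H →L[ℂ] H, IsSelfAdjoint S → IsSelfAdjoint T →
      S ∘L T = 0 → E (S + T) = E S + E T)
    (hzero : E 0 = 0)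
    (e : H) (he : ‖e‖ = 1)
    (m : ℕ) (K : Fin m → Submodule ℂ H) [∀ j, FiniteDimensional ℂ (K j)]
    (hKorth : ∀ i j : Fin m, i ≠ j → ∀ x ∈ K i, ∀ y ∈ K j, (inner ℂ x y : ℂ) = 0)
    (lam : Fin m → ℝ) :
    E (∑ j, (lam j : ℂ) • ((K j).subtypeL ∘L Submodule.orthogonalProjectionOnto (K j))) =
      ∑ j, (Module.finrank ℂ (K j)) •
        E ((lam j : ℂ) • ((ℂ ∙ e).subtypeL ∘L Submodule.orthogonalProjectionOnto (ℂ ∙ e))) := by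
  have hPcomp : ∀ i j : Fin m, i ≠ j →
      ((K i).subtypeL ∘L Submodule.orthogonalProjectionOnto (K i)) ∘L
        ((K j).subtypeL ∘L Submodule.orthogonalProjectionOnto (K j)) = 0 := by
    intro i j hij
    ext x
    simp only [ContinuousLinearMap.comp_apply, ContinuousLinearMap.zero_apply,
      Submodule.subtypeL_apply]
    have hmem : ((Submodule.orthogonalProjectionOnto (K j) x : H)) ∈ (K i)ᗮ := by
      rw [Submodule.mem_orthogonal]
      intro u hu
      exact hKorth i j hij u hu _ (Submodule.coe_mem _)
    rw [Submodule.orthogonalProjectionOnto_apply_of_mem_orthogonal hmem]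
    simp
  rw [eval_sum E horth hzero Finset.univ _
    (fun j _ => smul_proj_selfAdjoint (K j) (lam j))
    (fun i _ j _ hij => by
      rw [smul_comp, comp_smul, hPcomp i j hij]
      simp)]
  exact Finset.sum_congr rfl fun j _ =>
    findim_eval E hunitary horth hzero e he (K j) (lam j)
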